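/- Let C = {c_1,...,c_N} be an (M,N,d,w) constant-weight binary code with average distance D, let t be a positive integer with t ≤ N and w − t(w − D/2) > 0, and let ε ∈ (0,1). Suppose w − d/2 ≤ 3(w − t(w − D/2))² / (2(2t(w − D/2) + w)·ln(N/ε)). Then, if each index j ∈ {1,...,N} is independently declared defective with probability t/N, the probability that there exists a non-defective index i with supp(c_i) ⊆ ∪_{j defective} supp(c_j) is at most ε; hence the disjunct decoder identifies the random defective set exactly with probability at least 1 − ε. -/

import Mathlib

open Real Finset

private lemma hasDerivA (x : ℝ) (hx : -1 < x) :
    HasDerivAt (fun u => (2+u)*Real.log (1+u) - 2*u)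
      (Real.log (1+x) + (2+x)*(1+x)⁻¹ - 2) x := by
  have h1 : HasDerivAt (fun u : ℝ => 1 + u) 1 x := (hasDerivAt_id x).const_add 1
  have h2 : HasDerivAt (fun u : ℝ => Real.log (1+u)) ((1+x)⁻¹) x := by
    exact ((Real.hasDerivAt_log (by linarith)).comp x h1).congr_deriv (by simp)
  have h3 : HasDerivAt (fun u : ℝ => (2+u)*Real.log (1+u))
      (1 * Real.log (1+x) + (2+x)*(1+x)⁻¹) x :=
    ((hasDerivAt_id x).const_add 2).mul h2
  have h4 : HasDerivAt (fun u : ℝ => 2*u) 2 x := by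
    simpa using (hasDerivAt_id x).const_mul 2
  have := h3.sub h4
  exact this.congr_deriv (by ring)

private lemma lemA {u : ℝ} (hu : 0 ≤ u) : 2*u ≤ (2+u) * Real.log (1+u) := by
  set f : ℝ → ℝ := fun u => (2+u)*Real.log (1+u) - 2*u with hf
  have key : MonotoneOn f (Set.Ici 0) := by
    apply monotoneOn_of_deriv_nonneg (convex_Ici 0)
    · intro x hx
      exact (hasDerivA x (by simp at hx; linarith)).continuousAt.continuousWithinAt
    · intro x hx
      rw [interior_Ici] at hx
      exact (hasDerivA x (by simp at hx; linarith)).differentiableAt.differentiableWithinAt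
    · intro x hx
      rw [interior_Ici] at hx
      simp only [Set.mem_Ioi] at hx
      rw [(hasDerivA x (by linarith)).deriv]
      have hlog : 1 - (1+x)⁻¹ ≤ Real.log (1+x) :=
        Real.one_sub_inv_le_log_of_pos (by linarith)
      have : (2+x)*(1+x)⁻¹ - 2 = -(1 - (1+x)⁻¹) := by
        field_simp
        ring
      nlinarith [hlog]
  have h0 : f 0 ≤ f u := key (Set.self_mem_Ici) (Set.mem_Ici.mpr hu) hu
  simp [hf] at h0
  linarith

private lemma hasDerivB (x : ℝ) (hx : -1 < x) :
    HasDerivAt (fun u => (6+2*u)*((1+u)*Real.log (1+u) - u) - 3*u^2)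
      (2*((1+x)*Real.log (1+x) - x) + (6+2*x)*(Real.log (1+x)) - 6*x) x := by
  have h1 : HasDerivAt (fun u : ℝ => 1 + u) 1 x := (hasDerivAt_id x).const_add 1
  have h2 : HasDerivAt (fun u : ℝ => Real.log (1+u)) ((1+x)⁻¹) x := by
    exact ((Real.hasDerivAt_log (by linarith)).comp x h1).congr_deriv (by simp)
  have h3 : HasDerivAt (fun u : ℝ => (1+u)*Real.log (1+u) - u)
      (Real.log (1+x)) x := by
    have := (h1.mul h2).sub (hasDerivAt_id x)
    have e : 1 * Real.log (1+x) + (1+x)*(1+x)⁻¹ - 1 = Real.log (1+x) := by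
      rw [mul_inv_cancel₀ (by linarith : (1:ℝ)+x ≠ 0)]; ring
    rw [← e]; exact this
  have h4 : HasDerivAt (fun u : ℝ => 6+2*u) 2 x := by
    simpa using ((hasDerivAt_id x).const_mul 2).const_add 6
  have h5 := (h4.mul h3).sub ((hasDerivAt_pow 2 x).const_mul 3)
  exact h5.congr_deriv (by ring)

private lemma lemB {u : ℝ} (hu : 0 ≤ u) :
    3*u^2 ≤ (6+2*u) * ((1+u)*Real.log (1+u) - u) := by
  set f : ℝ → ℝ := fun u => (6+2*u)*((1+u)*Real.log (1+u) - u) - 3*u^2 with hf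
  have key : MonotoneOn f (Set.Ici 0) := by
    apply monotoneOn_of_deriv_nonneg (convex_Ici 0)
    · intro x hx
      exact (hasDerivB x (by simp at hx; linarith)).continuousAt.continuousWithinAt
    · intro x hx
      rw [interior_Ici] at hx
      exact (hasDerivB x (by simp at hx; linarith)).differentiableAt.differentiableWithinAt
    · intro x hx
      rw [interior_Ici] at hx
      simp only [Set.mem_Ioi] at hx
      rw [(hasDerivB x (by linarith)).deriv]
      have hA := lemA (le_of_lt hx)
      nlinarith
  have h0 : f 0 ≤ f u := key (Set.self_mem_Ici) (Set.mem_Ici.mpr hu) hu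
  simp [hf] at h0
  linarith

private lemma exp_interp {b n s : ℝ} (hb : 0 < b) (hn0 : 0 ≤ n) (hnb : n ≤ b) (hs : 0 ≤ s) :
    Real.exp (s*n) - 1 ≤ (n/b) * (Real.exp (s*b) - 1) := by
  have hθ0 : 0 ≤ n/b := div_nonneg hn0 hb.le
  have hθ1 : n/b ≤ 1 := (div_le_one hb).mpr hnb
  have := convexOn_exp.2 (Set.mem_univ (0:ℝ)) (Set.mem_univ (s*b))
    (by linarith : (0:ℝ) ≤ 1 - n/b) hθ0 (by ring)
  simp only [smul_eq_mul, mul_zero, zero_add, Real.exp_zero] at this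
  have he : (n/b) * (s*b) = s*n := by field_simp
  rw [he] at this
  nlinarith

private lemma hamming_eq (Mm : ℕ) (x y : Fin Mm → Bool) :
    hammingDist x y + 2 * ((Finset.univ.filter (fun m => x m = true)) ∩
      (Finset.univ.filter (fun m => y m = true))).card
    = (Finset.univ.filter (fun m => x m = true)).card +
      (Finset.univ.filter (fun m => y m = true)).card := by
  classical
  set A := Finset.univ.filter (fun m => x m = true)
  set B := Finset.univ.filter (fun m => y m = true)
  have hsub : A ∩ B ⊆ A ∪ B := (Finset.inter_subset_left).trans Finset.subset_union_left
  have hdist : hammingDist x y + (A ∩ B).card = (A ∪ B).card := by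
    have : hammingDist x y = ((A ∪ B) \ (A ∩ B)).card := by
      unfold hammingDist
      congr 1
      ext m
      simp only [A, B, Finset.mem_filter, Finset.mem_univ, true_and, Finset.mem_sdiff,
        Finset.mem_union, Finset.mem_inter]
      cases hx : x m <;> cases hy : y m <;> simp
    rw [this, Finset.card_sdiff_of_subset hsub]
    have := Finset.card_le_card hsub
    omega
  have := Finset.card_union_add_card_inter A B
  omega

set_option maxHeartbeats 4000000 in
/-- Theorem for Model 1: for a constant-weight code with minimum
distance `d` and average distance `D` satisfying
`w − d/2 ≤ 3(w − t(w − D/2))² / (2(2t(w − D/2) + w)·ln(N/ε))`, if every item is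
independently defective with probability `t/N`, then the probability that some
non-defective column has its support covered by the defective columns is at most `ε`. -/
theorem model1_recovery (M N d w t : ℕ) (D ε : ℝ) (c : Fin N → Fin M → Bool)
    (hN : 0 < N)
    (hinj : Function.Injective c)
    (hw : ∀ i, (Finset.univ.filter (fun j => c i j = true)).card = w)
    (hd : ∀ i j, i ≠ j → d ≤ hammingDist (c i) (c j))
    (hD : D = (1 / (N : ℝ)) *
      Finset.univ.inf' (Finset.univ_nonempty_iff.mpr ⟨⟨0, hN⟩⟩)
        (fun i => ∑ j, (hammingDist (c i) (c j) : ℝ)))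
    (ht1 : 1 ≤ t) (ht2 : t ≤ N)
    (hpos : 0 < (w : ℝ) - (t : ℝ) * ((w : ℝ) - D / 2))
    (hε0 : 0 < ε) (hε1 : ε < 1)
    (hcond : (w : ℝ) - (d : ℝ) / 2 ≤
      3 * ((w : ℝ) - (t : ℝ) * ((w : ℝ) - D / 2)) ^ 2 /
        (2 * (2 * (t : ℝ) * ((w : ℝ) - D / 2) + (w : ℝ)) * Real.log ((N : ℝ) / ε))) :
    ∑ S ∈ Finset.univ.filter (fun S : Finset (Fin N) =>
        ∃ i ∉ S, Finset.univ.filter (fun j => c i j = true) ⊆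
          S.biUnion fun k => Finset.univ.filter (fun j => c k j = true)),
      ((t : ℝ) / (N : ℝ)) ^ S.card * (1 - (t : ℝ) / (N : ℝ)) ^ (N - S.card) ≤ ε := by
  classical
  set A : Fin N → Finset (Fin M) := fun k => Finset.univ.filter (fun m => c k m = true) with hA
  show ∑ S ∈ Finset.univ.filter (fun S : Finset (Fin N) =>
        ∃ i ∉ S, A i ⊆ S.biUnion A),
      ((t : ℝ) / (N : ℝ)) ^ S.card * (1 - (t : ℝ) / (N : ℝ)) ^ (N - S.card) ≤ ε
  have hN0 : (0:ℝ) < N := by exact_mod_cast hN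
  have ht0 : (1:ℝ) ≤ (t:ℝ) := by exact_mod_cast ht1
  have hp0 : 0 < (t:ℝ)/(N:ℝ) := div_pos (by linarith) hN0
  have hp1 : (t:ℝ)/(N:ℝ) ≤ 1 := by
    rw [div_le_one hN0]; exact_mod_cast ht2
  have hq0 : (0:ℝ) ≤ 1 - (t:ℝ)/(N:ℝ) := by linarith
  set n : Fin N → Fin N → ℕ := fun i j => ((A i) ∩ (A j)).card with hn
  have hwA : ∀ k, (A k).card = w := hw
  have hham : ∀ i j, (hammingDist (c i) (c j) : ℝ) = 2*(w:ℝ) - 2*((n i j : ℕ):ℝ) := by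
    intro i j
    have h := hamming_eq M (c i) (c j)
    have : hammingDist (c i) (c j) + 2 * n i j = w + w := by
      rw [hn]; simp only [hA] at h ⊢; rw [h, hw i, hw j]
    have := congrArg (fun z : ℕ => (z:ℝ)) this
    push_cast at this
    linarith
  have hnii : ∀ i, n i i = w := by
    intro i; simp only [hn, Finset.inter_self]; exact hwA i
  have hDle : ∀ i, (N:ℝ) * D ≤ ∑ j, (hammingDist (c i) (c j) : ℝ) := by
    intro i
    have h1 : Finset.univ.inf' (Finset.univ_nonempty_iff.mpr ⟨⟨0, hN⟩⟩)
        (fun i => ∑ j, (hammingDist (c i) (c j) : ℝ)) ≤ ∑ j, (hammingDist (c i) (c j) : ℝ) :=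
      Finset.inf'_le _ (Finset.mem_univ i)
    have hNne : (N:ℝ) ≠ 0 := ne_of_gt hN0
    set X := Finset.univ.inf' (Finset.univ_nonempty_iff.mpr ⟨⟨0, hN⟩⟩)
        (fun i => ∑ j, (hammingDist (c i) (c j) : ℝ)) with hX
    rw [hD]
    have he : (N:ℝ) * ((1/(N:ℝ)) * X) = X := by field_simp
    rw [he]
    exact h1
  have hsum_dist : ∀ i, ∑ j, (hammingDist (c i) (c j) : ℝ)
      = 2*(w:ℝ)*(N:ℝ) - 2*∑ j, ((n i j:ℕ):ℝ) := by
    intro i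
    rw [Finset.sum_congr rfl (fun j _ => hham i j)]
    rw [Finset.sum_sub_distrib, Finset.sum_const, ← Finset.mul_sum]
    simp [Finset.card_univ]
    ring
  have hsum_n : ∀ i, ((t:ℝ)/(N:ℝ)) * ∑ j, ((n i j : ℕ):ℝ) ≤ (t:ℝ)*((w:ℝ) - D/2) := by
    intro i
    have h2 := hDle i
    rw [hsum_dist i] at h2
    have h3 : ∑ j, ((n i j:ℕ):ℝ) ≤ (N:ℝ)*((w:ℝ) - D/2) := by linarith
    calc ((t:ℝ)/(N:ℝ)) * ∑ j, ((n i j : ℕ):ℝ)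
        ≤ ((t:ℝ)/(N:ℝ)) * ((N:ℝ)*((w:ℝ) - D/2)) := by
          apply mul_le_mul_of_nonneg_left h3 (le_of_lt hp0)
      _ = (t:ℝ)*((w:ℝ) - D/2) := by field_simp
  have hw1 : 1 ≤ w := by
    by_contra h
    have hw0 : w = 0 := by omega
    have hn0 : ∀ j, n (⟨0,hN⟩ : Fin N) j = 0 := by
      intro j
      have : n ⟨0,hN⟩ j ≤ (A (⟨0,hN⟩:Fin N)).card := Finset.card_le_card Finset.inter_subset_left
      rw [hwA, hw0] at this; omega
    have hD0 : (N:ℝ)*D ≤ 0 := by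
      have h2 := hDle ⟨0,hN⟩
      have he : ∑ j, (hammingDist (c ⟨0,hN⟩) (c j) : ℝ) = 0 := by
        apply Finset.sum_eq_zero
        intro j _
        rw [hham, hn0 j, hw0]; norm_num
      linarith [he ▸ h2]
    have hwR : ((w:ℕ):ℝ) = 0 := by rw [hw0]; norm_num
    have hDle0 : D ≤ 0 := by nlinarith
    rw [hwR] at hpos
    nlinarith [mul_nonneg (by linarith : (0:ℝ) ≤ (t:ℝ)) (by linarith : (0:ℝ) ≤ -D)]
  have hw0R : (1:ℝ) ≤ (w:ℝ) := by exact_mod_cast hw1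
  have hα : 0 < (w:ℝ) - D/2 := by
    have h2 := hDle ⟨0,hN⟩
    rw [hsum_dist ⟨0,hN⟩] at h2
    have h3 : (w:ℝ) ≤ ∑ j, ((n ⟨0,hN⟩ j:ℕ):ℝ) := by
      have := Finset.single_le_sum (f := fun j => ((n ⟨0,hN⟩ j:ℕ):ℝ))
        (fun j _ => by positivity) (Finset.mem_univ (⟨0,hN⟩:Fin N))
      simpa [hnii] using this
    nlinarith
  -- abbreviations
  set b : ℝ := (w:ℝ) - (d:ℝ)/2 with hbdef
  set μ : ℝ := (t:ℝ)*((w:ℝ) - D/2) with hμdef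
  set lam : ℝ := (w:ℝ) - μ with hlamdef
  have hμ0 : 0 < μ := by rw [hμdef]; nlinarith
  have hlam0 : 0 < lam := hpos
  have hN1 : (1:ℝ) ≤ (N:ℝ) := by
    have h1 : 1 ≤ N := hN
    exact_mod_cast h1
  have hL : 0 < Real.log ((N:ℝ)/ε) := by
    apply Real.log_pos
    rw [lt_div_iff₀ hε0]
    nlinarith
  set L : ℝ := Real.log ((N:ℝ)/ε) with hLdef
  have hcond2 : b * (2*(2*μ + (w:ℝ))*L) ≤ 3*lam^2 := by
    have hrw : 2 * (t:ℝ) * ((w:ℝ) - D/2) = 2*μ := by rw [hμdef]; ring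
    rw [hrw] at hcond
    have hden : 0 < 2*(2*μ+(w:ℝ))*L := by
      have : (0:ℝ) < 2*μ + w := by nlinarith
      positivity
    exact (le_div_iff₀ hden).mp hcond
  -- key per-index bound
  have key : ∀ i : Fin N,
      ∑ S ∈ Finset.univ.filter (fun S : Finset (Fin N) => i ∉ S ∧ A i ⊆ S.biUnion A),
        ((t : ℝ) / (N : ℝ)) ^ S.card * (1 - (t : ℝ) / (N : ℝ)) ^ (N - S.card) ≤ ε/(N:ℝ) := by
    intro i
    have hcov : ∀ S : Finset (Fin N), A i ⊆ S.biUnion A →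
        (w:ℝ) ≤ ∑ j ∈ S, ((n i j : ℕ):ℝ) := by
      intro S hS
      have hsub : A i ⊆ S.biUnion (fun j => A i ∩ A j) := by
        intro m hm
        obtain ⟨k, hk, hmk⟩ := Finset.mem_biUnion.mp (hS hm)
        exact Finset.mem_biUnion.mpr ⟨k, hk, Finset.mem_inter.mpr ⟨hm, hmk⟩⟩
      have h1 : w ≤ ∑ j ∈ S, n i j := by
        calc w = (A i).card := (hwA i).symm
          _ ≤ (S.biUnion (fun j => A i ∩ A j)).card := Finset.card_le_card hsub
          _ ≤ ∑ j ∈ S, (A i ∩ A j).card := Finset.card_biUnion_le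
      calc (w:ℝ) ≤ ((∑ j ∈ S, n i j : ℕ):ℝ) := by exact_mod_cast h1
        _ = ∑ j ∈ S, ((n i j:ℕ):ℝ) := by push_cast; rfl
    have hnb : ∀ j : Fin N, j ≠ i → ((n i j : ℕ):ℝ) ≤ b := by
      intro j hj
      have h1 : (d:ℝ) ≤ (hammingDist (c i) (c j) : ℝ) := by
        exact_mod_cast hd i j (Ne.symm hj)
      rw [hham i j] at h1
      rw [hbdef]; linarith
    rcases le_or_gt b 0 with hb | hb
    · -- degenerate case : no bad set
      have hempty : Finset.univ.filter
          (fun S : Finset (Fin N) => i ∉ S ∧ A i ⊆ S.biUnion A) = ∅ := by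
        rw [Finset.filter_eq_empty_iff]
        intro S _
        rintro ⟨hiS, hc⟩
        have h1 := hcov S hc
        have h2 : ∑ j ∈ S, ((n i j:ℕ):ℝ) ≤ 0 := by
          apply Finset.sum_nonpos
          intro j hj
          exact le_trans (hnb j (fun h => hiS (h ▸ hj))) hb
        linarith
      rw [hempty, Finset.sum_empty]
      positivity
    · -- main case
      set u : ℝ := lam/μ with hudef
      have hu0 : 0 < u := div_pos hlam0 hμ0
      have hμu : μ * u = lam := by rw [hudef]; field_simp
      set s : ℝ := Real.log (1+u) / b with hsdef
      have hs0 : 0 ≤ s := div_nonneg (Real.log_nonneg (by linarith)) hb.le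
      have hsb : s * b = Real.log (1+u) := by
        rw [hsdef]; field_simp
      have hesb : Real.exp (s*b) = 1 + u := by
        rw [hsb, Real.exp_log (by linarith)]
      set T : Finset (Fin N) := Finset.univ.erase i with hT
      have hcardT : T.card = N - 1 := by
        rw [hT, Finset.card_erase_of_mem (Finset.mem_univ i), Finset.card_univ, Fintype.card_fin]
      have hset : Finset.univ.filter
          (fun S : Finset (Fin N) => i ∉ S ∧ A i ⊆ S.biUnion A)
          = T.powerset.filter (fun S => A i ⊆ S.biUnion A) := by
        ext S
        simp only [Finset.mem_filter, Finset.mem_univ, true_and, Finset.mem_powerset, hT,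
          Finset.subset_erase, Finset.subset_univ, true_and]
        try tauto
      rw [hset]
      have main : ∑ S ∈ T.powerset.filter (fun S => A i ⊆ S.biUnion A),
          ((t : ℝ) / (N : ℝ)) ^ S.card * (1 - (t : ℝ) / (N : ℝ)) ^ (N - S.card)
          ≤ Real.exp (-(s*(w:ℝ)) + μ*(Real.exp (s*b) - 1)/b) := by
        calc ∑ S ∈ T.powerset.filter (fun S => A i ⊆ S.biUnion A),
            ((t : ℝ) / (N : ℝ)) ^ S.card * (1 - (t : ℝ) / (N : ℝ)) ^ (N - S.card)
            ≤ ∑ S ∈ T.powerset.filter (fun S => A i ⊆ S.biUnion A),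
              (((t : ℝ) / (N : ℝ)) ^ S.card * (1 - (t : ℝ) / (N : ℝ)) ^ (T.card - S.card))
                * Real.exp (s * ∑ j ∈ S, ((n i j:ℕ):ℝ) - s*(w:ℝ)) := by
              apply Finset.sum_le_sum
              intro S hS
              obtain ⟨hST, hcovS⟩ := Finset.mem_filter.mp hS
              have hST' : S ⊆ T := Finset.mem_powerset.mp hST
              have hcard : S.card ≤ T.card := Finset.card_le_card hST'
              have hNc : N - S.card = (T.card - S.card) + 1 := by omega
              have hE : 0 ≤ s * ∑ j ∈ S, ((n i j:ℕ):ℝ) - s*(w:ℝ) := by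
                have := hcov S hcovS
                nlinarith
              have h1 : (1 - (t:ℝ)/(N:ℝ)) ≤ Real.exp (s * ∑ j ∈ S, ((n i j:ℕ):ℝ) - s*(w:ℝ)) :=
                le_trans (by linarith) (Real.one_le_exp hE)
              rw [hNc, pow_succ]
              calc ((t:ℝ)/(N:ℝ))^S.card * ((1 - (t:ℝ)/(N:ℝ))^(T.card - S.card) * (1 - (t:ℝ)/(N:ℝ)))
                  = (((t:ℝ)/(N:ℝ))^S.card * (1 - (t:ℝ)/(N:ℝ))^(T.card - S.card))
                    * (1 - (t:ℝ)/(N:ℝ)) := by ring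
                _ ≤ (((t:ℝ)/(N:ℝ))^S.card * (1 - (t:ℝ)/(N:ℝ))^(T.card - S.card))
                    * Real.exp (s * ∑ j ∈ S, ((n i j:ℕ):ℝ) - s*(w:ℝ)) := by
                      apply mul_le_mul_of_nonneg_left h1
                      positivity
          _ ≤ ∑ S ∈ T.powerset,
              (((t : ℝ) / (N : ℝ)) ^ S.card * (1 - (t : ℝ) / (N : ℝ)) ^ (T.card - S.card))
                * Real.exp (s * ∑ j ∈ S, ((n i j:ℕ):ℝ) - s*(w:ℝ)) := by
              apply Finset.sum_le_sum_of_subset_of_nonneg (Finset.filter_subset _ _)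
              intro S _ _
              positivity
          _ = Real.exp (-(s*(w:ℝ))) * ∑ S ∈ T.powerset,
              (∏ j ∈ S, (((t:ℝ)/(N:ℝ)) * Real.exp (s * ((n i j:ℕ):ℝ))))
                * ∏ j ∈ T \ S, (1 - (t:ℝ)/(N:ℝ)) := by
              rw [Finset.mul_sum]
              apply Finset.sum_congr rfl
              intro S hS
              have hST' : S ⊆ T := Finset.mem_powerset.mp hS
              rw [Finset.prod_mul_distrib, Finset.prod_const, Finset.prod_const,
                Finset.card_sdiff_of_subset hST', ← Real.exp_sum, ← Finset.mul_sum]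
              rw [show s * (∑ j ∈ S, ((n i j:ℕ):ℝ)) - s*(w:ℝ)
                  = -(s*(w:ℝ)) + s * ∑ j ∈ S, ((n i j:ℕ):ℝ) by ring, Real.exp_add]
              ring
          _ = Real.exp (-(s*(w:ℝ))) * ∏ j ∈ T, (((t:ℝ)/(N:ℝ)) * Real.exp (s * ((n i j:ℕ):ℝ))
                + (1 - (t:ℝ)/(N:ℝ))) := by
              rw [Finset.prod_add]
          _ ≤ Real.exp (-(s*(w:ℝ))) * ∏ j ∈ T,
                Real.exp (((t:ℝ)/(N:ℝ)) * (Real.exp (s * ((n i j:ℕ):ℝ)) - 1)) := by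
              apply mul_le_mul_of_nonneg_left _ (Real.exp_nonneg _)
              apply Finset.prod_le_prod
              · intro j _
                have := Real.exp_nonneg (s * ((n i j:ℕ):ℝ))
                nlinarith
              · intro j _
                have h2 := Real.add_one_le_exp (((t:ℝ)/(N:ℝ)) * (Real.exp (s * ((n i j:ℕ):ℝ)) - 1))
                linarith
          _ = Real.exp (-(s*(w:ℝ))) *
                Real.exp (∑ j ∈ T, ((t:ℝ)/(N:ℝ)) * (Real.exp (s * ((n i j:ℕ):ℝ)) - 1)) := by
              rw [Real.exp_sum]
          _ ≤ Real.exp (-(s*(w:ℝ)) + μ*(Real.exp (s*b) - 1)/b) := by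
              rw [← Real.exp_add]
              apply Real.exp_le_exp.mpr
              apply add_le_add_right
              have hfac0 : 0 ≤ (Real.exp (s*b) - 1)/b := by
                have h1 : (1:ℝ) ≤ Real.exp (s*b) := Real.one_le_exp (mul_nonneg hs0 hb.le)
                exact div_nonneg (by linarith) hb.le
              calc ∑ j ∈ T, ((t:ℝ)/(N:ℝ)) * (Real.exp (s * ((n i j:ℕ):ℝ)) - 1)
                  ≤ ∑ j ∈ T, ((t:ℝ)/(N:ℝ)) * (((n i j:ℕ):ℝ) * ((Real.exp (s*b) - 1)/b)) := by
                    apply Finset.sum_le_sum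
                    intro j hj
                    have hji : j ≠ i := Finset.ne_of_mem_erase hj
                    have h3 := exp_interp hb (by positivity : (0:ℝ) ≤ ((n i j:ℕ):ℝ))
                      (hnb j hji) hs0
                    apply mul_le_mul_of_nonneg_left _ hp0.le
                    calc Real.exp (s * ((n i j:ℕ):ℝ)) - 1
                        ≤ (((n i j:ℕ):ℝ)/b) * (Real.exp (s*b) - 1) := h3
                      _ = ((n i j:ℕ):ℝ) * ((Real.exp (s*b) - 1)/b) := by ring
                _ = (((t:ℝ)/(N:ℝ)) * ∑ j ∈ T, ((n i j:ℕ):ℝ)) * ((Real.exp (s*b) - 1)/b) := by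
                    rw [Finset.mul_sum, Finset.sum_mul]
                    apply Finset.sum_congr rfl
                    intro j _
                    ring
                _ ≤ μ * ((Real.exp (s*b) - 1)/b) := by
                    apply mul_le_mul_of_nonneg_right _ hfac0
                    calc ((t:ℝ)/(N:ℝ)) * ∑ j ∈ T, ((n i j:ℕ):ℝ)
                        ≤ ((t:ℝ)/(N:ℝ)) * ∑ j, ((n i j:ℕ):ℝ) := by
                          apply mul_le_mul_of_nonneg_left _ hp0.le
                          apply Finset.sum_le_sum_of_subset_of_nonneg (Finset.subset_univ T)
                          intro j _ _
                          positivity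
                      _ ≤ μ := hsum_n i
                _ = μ * (Real.exp (s*b) - 1)/b := by ring
      -- final exponent computation
      have hw_eq : (w:ℝ) = μ * (1+u) := by
        have : μ * (1+u) = μ + μ * u := by ring
        rw [this, hμu, hlamdef]; ring
      have hgoal2 : L ≤ (μ/b) * ((1+u) * Real.log (1+u) - u) := by
        have h6 : L * (b*(6+2*u)) ≤ 3*μ*u^2 := by
          have hfactor : 2*(2*μ+(w:ℝ)) = μ*(6+2*u) := by
            rw [hw_eq]; ring
          rw [hfactor] at hcond2
          have hlam2 : 3*lam^2 = μ * (3*μ*u^2) := by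
            rw [← hμu]; ring
          rw [hlam2] at hcond2
          have : μ * (L * (b*(6+2*u))) ≤ μ * (3*μ*u^2) := by nlinarith
          exact le_of_mul_le_mul_left this hμ0
        have h3 : 3*u^2/(6+2*u) ≤ (1+u) * Real.log (1+u) - u := by
          rw [div_le_iff₀ (by linarith : (0:ℝ) < 6+2*u)]
          nlinarith [lemB hu0.le]
        have hμb : 0 < μ/b := div_pos hμ0 hb
        calc L ≤ (μ/b) * (3*u^2/(6+2*u)) := by
              rw [div_mul_div_comm]
              rw [le_div_iff₀ (by positivity : (0:ℝ) < b*(6+2*u))]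
              nlinarith
          _ ≤ (μ/b) * ((1+u) * Real.log (1+u) - u) := by
              apply mul_le_mul_of_nonneg_left h3 hμb.le
      have hfin : -(s*(w:ℝ)) + μ*(Real.exp (s*b) - 1)/b ≤ -L := by
        rw [hesb]
        have e1 : -(s*(w:ℝ)) + μ*((1+u) - 1)/b
            = -((μ/b) * ((1+u) * Real.log (1+u) - u)) := by
          rw [hsdef, hw_eq]
          field_simp
          ring
        rw [e1]
        linarith
      calc ∑ S ∈ T.powerset.filter (fun S => A i ⊆ S.biUnion A),
          ((t : ℝ) / (N : ℝ)) ^ S.card * (1 - (t : ℝ) / (N : ℝ)) ^ (N - S.card)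
          ≤ Real.exp (-(s*(w:ℝ)) + μ*(Real.exp (s*b) - 1)/b) := main
        _ ≤ Real.exp (-L) := Real.exp_le_exp.mpr hfin
        _ = ε/(N:ℝ) := by
            rw [hLdef, Real.exp_neg, Real.exp_log (by positivity), inv_div]
  -- assembly
  have htotal : ∑ S ∈ Finset.univ.filter (fun S : Finset (Fin N) =>
        ∃ i ∉ S, A i ⊆ S.biUnion A),
      ((t : ℝ) / (N : ℝ)) ^ S.card * (1 - (t : ℝ) / (N : ℝ)) ^ (N - S.card)
      ≤ ∑ i : Fin N, ∑ S ∈ Finset.univ.filter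
          (fun S : Finset (Fin N) => i ∉ S ∧ A i ⊆ S.biUnion A),
        ((t : ℝ) / (N : ℝ)) ^ S.card * (1 - (t : ℝ) / (N : ℝ)) ^ (N - S.card) := by
    have h1 : ∀ S ∈ Finset.univ.filter (fun S : Finset (Fin N) =>
          ∃ i ∉ S, A i ⊆ S.biUnion A),
        ((t : ℝ) / (N : ℝ)) ^ S.card * (1 - (t : ℝ) / (N : ℝ)) ^ (N - S.card)
        ≤ ∑ i : Fin N, (if i ∉ S ∧ A i ⊆ S.biUnion A then
            ((t : ℝ) / (N : ℝ)) ^ S.card * (1 - (t : ℝ) / (N : ℝ)) ^ (N - S.card) else 0) := by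
      intro S hS
      obtain ⟨i, hiS, hic⟩ := (Finset.mem_filter.mp hS).2
      have h2 : (if i ∉ S ∧ A i ⊆ S.biUnion A then
          ((t : ℝ) / (N : ℝ)) ^ S.card * (1 - (t : ℝ) / (N : ℝ)) ^ (N - S.card) else 0)
          = ((t : ℝ) / (N : ℝ)) ^ S.card * (1 - (t : ℝ) / (N : ℝ)) ^ (N - S.card) := by
        rw [if_pos ⟨hiS, hic⟩]
      calc ((t : ℝ) / (N : ℝ)) ^ S.card * (1 - (t : ℝ) / (N : ℝ)) ^ (N - S.card)
          = (if i ∉ S ∧ A i ⊆ S.biUnion A then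
            ((t : ℝ) / (N : ℝ)) ^ S.card * (1 - (t : ℝ) / (N : ℝ)) ^ (N - S.card) else 0) :=
            h2.symm
        _ ≤ _ := by
            apply Finset.single_le_sum (f := fun i => (if i ∉ S ∧ A i ⊆ S.biUnion A then
              ((t : ℝ) / (N : ℝ)) ^ S.card * (1 - (t : ℝ) / (N : ℝ)) ^ (N - S.card) else 0))
              _ (Finset.mem_univ i)
            intro k _
            split
            · positivity
            · exact le_refl 0
    calc ∑ S ∈ Finset.univ.filter (fun S : Finset (Fin N) =>
          ∃ i ∉ S, A i ⊆ S.biUnion A),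
        ((t : ℝ) / (N : ℝ)) ^ S.card * (1 - (t : ℝ) / (N : ℝ)) ^ (N - S.card)
        ≤ ∑ S ∈ Finset.univ.filter (fun S : Finset (Fin N) =>
            ∃ i ∉ S, A i ⊆ S.biUnion A),
          ∑ i : Fin N, (if i ∉ S ∧ A i ⊆ S.biUnion A then
            ((t : ℝ) / (N : ℝ)) ^ S.card * (1 - (t : ℝ) / (N : ℝ)) ^ (N - S.card) else 0) :=
          Finset.sum_le_sum h1
      _ ≤ ∑ S : Finset (Fin N),
          ∑ i : Fin N, (if i ∉ S ∧ A i ⊆ S.biUnion A then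
            ((t : ℝ) / (N : ℝ)) ^ S.card * (1 - (t : ℝ) / (N : ℝ)) ^ (N - S.card) else 0) := by
          apply Finset.sum_le_sum_of_subset_of_nonneg (Finset.filter_subset _ _)
          intro S _ _
          apply Finset.sum_nonneg
          intro k _
          split
          · positivity
          · exact le_refl 0
      _ = ∑ i : Fin N, ∑ S : Finset (Fin N),
          (if i ∉ S ∧ A i ⊆ S.biUnion A then
            ((t : ℝ) / (N : ℝ)) ^ S.card * (1 - (t : ℝ) / (N : ℝ)) ^ (N - S.card) else 0) :=
          Finset.sum_comm
      _ = ∑ i : Fin N, ∑ S ∈ Finset.univ.filter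
            (fun S : Finset (Fin N) => i ∉ S ∧ A i ⊆ S.biUnion A),
          ((t : ℝ) / (N : ℝ)) ^ S.card * (1 - (t : ℝ) / (N : ℝ)) ^ (N - S.card) := by
          apply Finset.sum_congr rfl
          intro i _
          rw [Finset.sum_filter]
  calc ∑ S ∈ Finset.univ.filter (fun S : Finset (Fin N) =>
        ∃ i ∉ S, A i ⊆ S.biUnion A),
      ((t : ℝ) / (N : ℝ)) ^ S.card * (1 - (t : ℝ) / (N : ℝ)) ^ (N - S.card)
      ≤ ∑ i : Fin N, ∑ S ∈ Finset.univ.filter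
          (fun S : Finset (Fin N) => i ∉ S ∧ A i ⊆ S.biUnion A),
        ((t : ℝ) / (N : ℝ)) ^ S.card * (1 - (t : ℝ) / (N : ℝ)) ^ (N - S.card) := htotal
    _ ≤ ∑ _i : Fin N, ε/(N:ℝ) := Finset.sum_le_sum (fun i _ => key i)
    _ = ε := by
        rw [Finset.sum_const, Finset.card_univ, Fintype.card_fin, nsmul_eq_mul]
        field_simp
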